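/- For every positive integer n, the graph G_n has a unique clique covering consisting of exactly n + 2 cliques, namely the collection consisting of the cliques {x_i, y_i} ∪ Z for 1 ≤ i ≤ n, together with {y_0} ∪ Y and {x_0} ∪ X. -/

import Mathlib

open Finset

/-- A clique covering of `G`: a finite family of cliques covering every edge. -/
def IsCliqueCover {V : Type*} (G : SimpleGraph V) (𝒞 : Finset (Finset V)) : Prop :=
  (∀ C ∈ 𝒞, G.IsClique (C : Set V)) ∧
  ∀ u v, G.Adj u v → ∃ C ∈ 𝒞, u ∈ C ∧ v ∈ C

/-- A clique partition of `G`: every edge lies in exactly one clique of the family. -/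
def IsCliquePartition {V : Type*} (G : SimpleGraph V) (𝒞 : Finset (Finset V)) : Prop :=
  (∀ C ∈ 𝒞, G.IsClique (C : Set V)) ∧
  ∀ u v, G.Adj u v → ∃! C, C ∈ 𝒞 ∧ u ∈ C ∧ v ∈ C

/-- The sigma clique cover number: minimum total size of cliques in a clique covering. -/
noncomputable def scc {V : Type*} (G : SimpleGraph V) : ℕ :=
  sInf {k | ∃ 𝒞, IsCliqueCover G 𝒞 ∧ ∑ C ∈ 𝒞, C.card = k}

/-- The sigma clique partition number: minimum total size of cliques in a clique partition. -/
noncomputable def scp {V : Type*} (G : SimpleGraph V) : ℕ :=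
  sInf {k | ∃ 𝒞, IsCliquePartition G 𝒞 ∧ ∑ C ∈ 𝒞, C.card = k}

/-- The clique cover number: minimum number of cliques in a clique covering. -/
noncomputable def cc {V : Type*} (G : SimpleGraph V) : ℕ :=
  sInf {k | ∃ 𝒞, IsCliqueCover G 𝒞 ∧ 𝒞.card = k}

/-- The clique partition number: minimum number of cliques in a clique partition. -/
noncomputable def cp {V : Type*} (G : SimpleGraph V) : ℕ :=
  sInf {k | ∃ 𝒞, IsCliquePartition G 𝒞 ∧ 𝒞.card = k}

/-- `scc'`: the minimum total size of cliques over clique coverings achieving `cc G`. -/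
noncomputable def scc' {V : Type*} (G : SimpleGraph V) : ℕ :=
  sInf {k | ∃ 𝒞, IsCliqueCover G 𝒞 ∧ 𝒞.card = cc G ∧ ∑ C ∈ 𝒞, C.card = k}
/-- The vertex set of the graph `Gₙ`: `x₀`, `y₀`, `X = {x i}`, `Y = {y i}`, `Z = {z i}`. -/
inductive Vtx (n : ℕ) : Type where
  | x0 : Vtx n
  | y0 : Vtx n
  | x : Fin n → Vtx n
  | y : Fin n → Vtx n
  | z : Fin n → Vtx n
  deriving DecidableEq, Fintype

/-- Membership in `X ∪ {x₀}`. -/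
def inXx0 {n : ℕ} : Vtx n → Prop
  | .x0 => True
  | .x _ => True
  | _ => False

/-- Membership in `Y ∪ {y₀}`. -/
def inYy0 {n : ℕ} : Vtx n → Prop
  | .y0 => True
  | .y _ => True
  | _ => False

/-- Membership in `Z`. -/
def inZ {n : ℕ} : Vtx n → Prop
  | .z _ => True
  | _ => False

/-- Membership in `X ∪ Y`. -/
def inXY {n : ℕ} : Vtx n → Prop
  | .x _ => True
  | .y _ => True
  | _ => False

/-- `xyPair u v` holds iff `u = x i` and `v = y i` for some `i`. -/
def xyPair {n : ℕ} : Vtx n → Vtx n → Prop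
  | .x i, .y j => i = j
  | _, _ => False

/-- The graph `Gₙ`: `X ∪ {x₀}`, `Y ∪ {y₀}` and `Z` are cliques, every vertex of `Z` is
adjacent to every vertex of `X ∪ Y`, and `x i` is adjacent to `y j` iff `i = j`. -/
def Gn (n : ℕ) : SimpleGraph (Vtx n) where
  Adj u v := u ≠ v ∧ (inXx0 u ∧ inXx0 v ∨ inYy0 u ∧ inYy0 v ∨ inZ u ∧ inZ v ∨
    inZ u ∧ inXY v ∨ inXY u ∧ inZ v ∨ xyPair u v ∨ xyPair v u)
  symm := ⟨by
    rintro u v ⟨h1, h2⟩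
    exact ⟨h1.symm, by tauto⟩⟩
  loopless := ⟨fun u h => h.1 rfl⟩

/-- The clique `{x i, y i} ∪ Z` of `Gₙ`. -/
def cliqueXYZ (n : ℕ) (i : Fin n) : Finset (Vtx n) :=
  insert (Vtx.x i) (insert (Vtx.y i) (Finset.univ.image Vtx.z))

/-- The clique `{x₀} ∪ X` of `Gₙ`. -/
def cliqueX (n : ℕ) : Finset (Vtx n) := insert Vtx.x0 (Finset.univ.image Vtx.x)

/-- The clique `{y₀} ∪ Y` of `Gₙ`. -/
def cliqueY (n : ℕ) : Finset (Vtx n) := insert Vtx.y0 (Finset.univ.image Vtx.y)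

/-- The collection of cliques `{x i, y i} ∪ Z` (for `1 ≤ i ≤ n`), `{x₀} ∪ X` and `{y₀} ∪ Y`. -/
def canonicalCover (n : ℕ) : Finset (Finset (Vtx n)) :=
  (Finset.univ.image (cliqueXYZ n)) ∪ {cliqueX n, cliqueY n}


section Helpers

variable {n : ℕ}

lemma gn_adj {u v : Vtx n} : (Gn n).Adj u v ↔ u ≠ v ∧ (inXx0 u ∧ inXx0 v ∨ inYy0 u ∧ inYy0 v ∨
    inZ u ∧ inZ v ∨ inZ u ∧ inXY v ∨ inXY u ∧ inZ v ∨ xyPair u v ∨ xyPair v u) := Iff.rfl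

lemma adj_x0_iff {v : Vtx n} : (Gn n).Adj .x0 v ↔ ∃ k, v = .x k := by
  cases v <;> simp [gn_adj, inXx0, inYy0, inZ, inXY, xyPair]

lemma adj_y0_iff {v : Vtx n} : (Gn n).Adj .y0 v ↔ ∃ k, v = .y k := by
  cases v <;> simp [gn_adj, inXx0, inYy0, inZ, inXY, xyPair]

lemma adj_xy_iff {i j : Fin n} : (Gn n).Adj (.x i) (.y j) ↔ i = j := by
  simp [gn_adj, inXx0, inYy0, inZ, inXY, xyPair]

lemma adj_xz {i k : Fin n} : (Gn n).Adj (.x i) (.z k) := by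
  simp [gn_adj, inXx0, inYy0, inZ, inXY, xyPair]

lemma common_xy {i : Fin n} {v : Vtx n} (h1 : (Gn n).Adj (.x i) v)
    (h2 : (Gn n).Adj (.y i) v) : ∃ k, v = .z k := by
  cases v <;> simp_all [gn_adj, inXx0, inYy0, inZ, inXY, xyPair]

lemma mem_cliqueX {v : Vtx n} : v ∈ cliqueX n ↔ v = .x0 ∨ ∃ k, v = .x k := by
  simp [cliqueX, eq_comm]

lemma mem_cliqueY {v : Vtx n} : v ∈ cliqueY n ↔ v = .y0 ∨ ∃ k, v = .y k := by
  simp [cliqueY, eq_comm]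

lemma mem_cliqueXYZ {i : Fin n} {v : Vtx n} :
    v ∈ cliqueXYZ n i ↔ v = .x i ∨ v = .y i ∨ ∃ k, v = .z k := by
  simp [cliqueXYZ, eq_comm]

lemma mem_canonicalCover {C : Finset (Vtx n)} :
    C ∈ canonicalCover n ↔ (∃ i, C = cliqueXYZ n i) ∨ C = cliqueX n ∨ C = cliqueY n := by
  simp only [canonicalCover, Finset.mem_union, Finset.mem_image, Finset.mem_univ, true_and,
    Finset.mem_insert, Finset.mem_singleton]
  constructor
  · rintro (⟨i, rfl⟩ | h) <;> tauto
  · rintro (⟨i, rfl⟩ | h) <;> tauto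

lemma x0_mem_cliqueX : (Vtx.x0 : Vtx n) ∈ cliqueX n := mem_cliqueX.mpr (Or.inl rfl)
lemma x_mem_cliqueX (i : Fin n) : Vtx.x i ∈ cliqueX n := mem_cliqueX.mpr (Or.inr ⟨i, rfl⟩)
lemma y0_mem_cliqueY : (Vtx.y0 : Vtx n) ∈ cliqueY n := mem_cliqueY.mpr (Or.inl rfl)
lemma y_mem_cliqueY (i : Fin n) : Vtx.y i ∈ cliqueY n := mem_cliqueY.mpr (Or.inr ⟨i, rfl⟩)
lemma x_mem_cliqueXYZ (i : Fin n) : Vtx.x i ∈ cliqueXYZ n i := mem_cliqueXYZ.mpr (Or.inl rfl)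
lemma y_mem_cliqueXYZ (i : Fin n) : Vtx.y i ∈ cliqueXYZ n i :=
  mem_cliqueXYZ.mpr (Or.inr (Or.inl rfl))
lemma z_mem_cliqueXYZ (i k : Fin n) : Vtx.z k ∈ cliqueXYZ n i :=
  mem_cliqueXYZ.mpr (Or.inr (Or.inr ⟨k, rfl⟩))

lemma cliqueX_mem_canonical : cliqueX n ∈ canonicalCover n :=
  mem_canonicalCover.mpr (Or.inr (Or.inl rfl))
lemma cliqueY_mem_canonical : cliqueY n ∈ canonicalCover n :=
  mem_canonicalCover.mpr (Or.inr (Or.inr rfl))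
lemma cliqueXYZ_mem_canonical (i : Fin n) : cliqueXYZ n i ∈ canonicalCover n :=
  mem_canonicalCover.mpr (Or.inl ⟨i, rfl⟩)

lemma subset_cliqueX {C : Finset (Vtx n)} (hC : (Gn n).IsClique (C : Set (Vtx n)))
    (h0 : Vtx.x0 ∈ C) : C ⊆ cliqueX n := by
  intro v hv
  rcases eq_or_ne v .x0 with rfl | hne
  · exact x0_mem_cliqueX
  · have := hC (Finset.mem_coe.mpr h0) (Finset.mem_coe.mpr hv) (Ne.symm hne)
    rw [mem_cliqueX]
    exact Or.inr (adj_x0_iff.mp this)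

lemma subset_cliqueY {C : Finset (Vtx n)} (hC : (Gn n).IsClique (C : Set (Vtx n)))
    (h0 : Vtx.y0 ∈ C) : C ⊆ cliqueY n := by
  intro v hv
  rcases eq_or_ne v .y0 with rfl | hne
  · exact y0_mem_cliqueY
  · have := hC (Finset.mem_coe.mpr h0) (Finset.mem_coe.mpr hv) (Ne.symm hne)
    rw [mem_cliqueY]
    exact Or.inr (adj_y0_iff.mp this)

lemma subset_cliqueXYZ {C : Finset (Vtx n)} {i : Fin n}
    (hC : (Gn n).IsClique (C : Set (Vtx n))) (hx : Vtx.x i ∈ C) (hy : Vtx.y i ∈ C) :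
    C ⊆ cliqueXYZ n i := by
  intro v hv
  rw [mem_cliqueXYZ]
  rcases eq_or_ne v (.x i) with rfl | hnex
  · tauto
  rcases eq_or_ne v (.y i) with rfl | hney
  · tauto
  have h1 := hC (Finset.mem_coe.mpr hx) (Finset.mem_coe.mpr hv) (Ne.symm hnex)
  have h2 := hC (Finset.mem_coe.mpr hy) (Finset.mem_coe.mpr hv) (Ne.symm hney)
  exact Or.inr (Or.inr (common_xy h1 h2))

lemma isClique_cliqueXYZ (i : Fin n) : (Gn n).IsClique (cliqueXYZ n i : Set (Vtx n)) := by
  rw [SimpleGraph.isClique_iff]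
  intro a ha b hb hab
  rw [Finset.mem_coe, mem_cliqueXYZ] at ha hb
  rcases ha with rfl | rfl | ⟨k, rfl⟩ <;> rcases hb with rfl | rfl | ⟨l, rfl⟩ <;>
    simp_all [gn_adj, inXx0, inYy0, inZ, inXY, xyPair]

lemma isClique_cliqueX : (Gn n).IsClique (cliqueX n : Set (Vtx n)) := by
  rw [SimpleGraph.isClique_iff]
  intro a ha b hb hab
  rw [Finset.mem_coe, mem_cliqueX] at ha hb
  rcases ha with rfl | ⟨k, rfl⟩ <;> rcases hb with rfl | ⟨l, rfl⟩ <;>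
    simp_all [gn_adj, inXx0, inYy0, inZ, inXY, xyPair]

lemma isClique_cliqueY : (Gn n).IsClique (cliqueY n : Set (Vtx n)) := by
  rw [SimpleGraph.isClique_iff]
  intro a ha b hb hab
  rw [Finset.mem_coe, mem_cliqueY] at ha hb
  rcases ha with rfl | ⟨k, rfl⟩ <;> rcases hb with rfl | ⟨l, rfl⟩ <;>
    simp_all [gn_adj, inXx0, inYy0, inZ, inXY, xyPair]

lemma cliqueXYZ_inj : Function.Injective (cliqueXYZ (n := n)) := by
  intro i j h
  have : Vtx.x i ∈ cliqueXYZ n j := h ▸ x_mem_cliqueXYZ i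
  simpa [mem_cliqueXYZ] using this

lemma x0_not_mem_cliqueXYZ {i : Fin n} : Vtx.x0 ∉ cliqueXYZ n i := by simp [mem_cliqueXYZ]
lemma y0_not_mem_cliqueXYZ {i : Fin n} : Vtx.y0 ∉ cliqueXYZ n i := by simp [mem_cliqueXYZ]
lemma x0_not_mem_cliqueY : (Vtx.x0 : Vtx n) ∉ cliqueY n := by simp [mem_cliqueY]

lemma canonicalCover_isCover (hn : 1 ≤ n) : IsCliqueCover (Gn n) (canonicalCover n) := by
  constructor
  · intro C hC
    rw [mem_canonicalCover] at hC
    rcases hC with ⟨i, rfl⟩ | rfl | rfl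
    · exact isClique_cliqueXYZ i
    · exact isClique_cliqueX
    · exact isClique_cliqueY
  · intro u v huv
    rcases u with _ | _ | i | i | i <;> rcases v with _ | _ | j | j | j <;>
      simp [gn_adj, inXx0, inYy0, inZ, inXY, xyPair] at huv <;>
      first
      | exact ⟨cliqueX n, cliqueX_mem_canonical, x0_mem_cliqueX, x_mem_cliqueX j⟩
      | exact ⟨cliqueX n, cliqueX_mem_canonical, x_mem_cliqueX i, x0_mem_cliqueX⟩
      | exact ⟨cliqueX n, cliqueX_mem_canonical, x_mem_cliqueX i, x_mem_cliqueX j⟩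
      | exact ⟨cliqueY n, cliqueY_mem_canonical, y0_mem_cliqueY, y_mem_cliqueY j⟩
      | exact ⟨cliqueY n, cliqueY_mem_canonical, y_mem_cliqueY i, y0_mem_cliqueY⟩
      | exact ⟨cliqueY n, cliqueY_mem_canonical, y_mem_cliqueY i, y_mem_cliqueY j⟩
      | exact ⟨cliqueXYZ n i, cliqueXYZ_mem_canonical i, x_mem_cliqueXYZ i,
          z_mem_cliqueXYZ i j⟩
      | exact ⟨cliqueXYZ n i, cliqueXYZ_mem_canonical i, y_mem_cliqueXYZ i,
          z_mem_cliqueXYZ i j⟩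
      | exact ⟨cliqueXYZ n j, cliqueXYZ_mem_canonical j, z_mem_cliqueXYZ j i,
          x_mem_cliqueXYZ j⟩
      | exact ⟨cliqueXYZ n j, cliqueXYZ_mem_canonical j, z_mem_cliqueXYZ j i,
          y_mem_cliqueXYZ j⟩
      | exact ⟨cliqueXYZ n ⟨0, hn⟩, cliqueXYZ_mem_canonical _, z_mem_cliqueXYZ _ i,
          z_mem_cliqueXYZ _ j⟩
      | (obtain rfl := huv
         exact ⟨cliqueXYZ n i, cliqueXYZ_mem_canonical i, x_mem_cliqueXYZ i,
           y_mem_cliqueXYZ i⟩)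
      | (obtain rfl := huv
         exact ⟨cliqueXYZ n i, cliqueXYZ_mem_canonical i, y_mem_cliqueXYZ i,
           x_mem_cliqueXYZ i⟩)
      | (obtain rfl := huv
         exact ⟨cliqueXYZ n j, cliqueXYZ_mem_canonical j, x_mem_cliqueXYZ j,
           y_mem_cliqueXYZ j⟩)
      | (obtain rfl := huv
         exact ⟨cliqueXYZ n j, cliqueXYZ_mem_canonical j, y_mem_cliqueXYZ j,
           x_mem_cliqueXYZ j⟩)

lemma canonicalCover_card : (canonicalCover n).card = n + 2 := by
  rw [canonicalCover, Finset.card_union_of_disjoint]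
  · rw [Finset.card_image_of_injective _ cliqueXYZ_inj, Finset.card_univ, Fintype.card_fin]
    congr 1
    rw [Finset.card_insert_of_notMem, Finset.card_singleton]
    intro h
    rw [Finset.mem_singleton] at h
    exact x0_not_mem_cliqueY (h ▸ x0_mem_cliqueX)
  · rw [Finset.disjoint_left]
    rintro C hC hC2
    simp only [Finset.mem_image, Finset.mem_univ, true_and] at hC
    obtain ⟨i, rfl⟩ := hC
    rw [Finset.mem_insert, Finset.mem_singleton] at hC2
    rcases hC2 with h | h
    · exact x0_not_mem_cliqueXYZ (h ▸ x0_mem_cliqueX)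
    · exact y0_not_mem_cliqueXYZ (h ▸ y0_mem_cliqueY)

end Helpers

/-- For every positive integer `n`, the graph `Gₙ` has a unique clique covering consisting of
exactly `n + 2` cliques, namely `{x i, y i} ∪ Z` for `1 ≤ i ≤ n`, `{x₀} ∪ X` and `{y₀} ∪ Y`. -/
theorem stmt_2 (n : ℕ) (hn : 1 ≤ n) (𝒞 : Finset (Finset (Vtx n))) :
    (IsCliqueCover (Gn n) 𝒞 ∧ 𝒞.card = n + 2) ↔ 𝒞 = canonicalCover n := by
  constructor
  · rintro ⟨⟨hclq, hcov⟩, hcard⟩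
    have hxy : ∀ i : Fin n, (Gn n).Adj (.x i) (.y i) := fun i => adj_xy_iff.mpr rfl
    set f : Fin n → Finset (Vtx n) := fun i => (hcov _ _ (hxy i)).choose with hf
    have hfmem : ∀ i, f i ∈ 𝒞 ∧ Vtx.x i ∈ f i ∧ Vtx.y i ∈ f i :=
      fun i => (hcov _ _ (hxy i)).choose_spec
    have hx_f : ∀ i j, Vtx.x i ∈ f j → i = j := by
      intro i j h
      have hadj := hclq _ (hfmem j).1 (Finset.mem_coe.mpr h)
        (Finset.mem_coe.mpr (hfmem j).2.2) (by simp)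
      exact adj_xy_iff.mp hadj
    obtain ⟨CX, hCXmem, hx0CX, hx1CX⟩ := hcov _ _ (adj_x0_iff.mpr ⟨⟨0, hn⟩, rfl⟩)
    obtain ⟨CY, hCYmem, hy0CY, hy1CY⟩ := hcov _ _ (adj_y0_iff.mpr ⟨⟨0, hn⟩, rfl⟩)
    have hCXsub : CX ⊆ cliqueX n := subset_cliqueX (hclq _ hCXmem) hx0CX
    have hCYsub : CY ⊆ cliqueY n := subset_cliqueY (hclq _ hCYmem) hy0CY
    have hCXnotf : ∀ i, CX ≠ f i := by
      intro i h
      have : Vtx.y i ∈ cliqueX n := hCXsub (h ▸ (hfmem i).2.2)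
      simpa [mem_cliqueX] using this
    have hCYnotf : ∀ i, CY ≠ f i := by
      intro i h
      have : Vtx.x i ∈ cliqueY n := hCYsub (h ▸ (hfmem i).2.1)
      simpa [mem_cliqueY] using this
    have hCXCY : CX ≠ CY := by
      intro h
      exact x0_not_mem_cliqueY (hCYsub (h ▸ hx0CX))
    have hfinj : Function.Injective f := by
      intro i j h
      exact hx_f i j (h ▸ (hfmem i).2.1)
    set S : Finset (Finset (Vtx n)) := insert CX (insert CY (Finset.univ.image f)) with hSdef
    have hSsub : S ⊆ 𝒞 := by
      intro C hC
      rw [hSdef, Finset.mem_insert, Finset.mem_insert] at hC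
      rcases hC with rfl | rfl | hC
      · exact hCXmem
      · exact hCYmem
      · simp only [Finset.mem_image, Finset.mem_univ, true_and] at hC
        obtain ⟨i, rfl⟩ := hC
        exact (hfmem i).1
    have hScard : S.card = n + 2 := by
      rw [hSdef, Finset.card_insert_of_notMem, Finset.card_insert_of_notMem,
        Finset.card_image_of_injective _ hfinj, Finset.card_univ, Fintype.card_fin]
      · simp only [Finset.mem_image, Finset.mem_univ, true_and, not_exists]
        intro i h
        exact hCYnotf i h.symm
      · simp only [Finset.mem_insert, Finset.mem_image, Finset.mem_univ, true_and, not_or,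
          not_exists]
        exact ⟨hCXCY, fun i h => hCXnotf i h.symm⟩
    have hS : S = 𝒞 := Finset.eq_of_subset_of_card_le hSsub (by rw [hcard, hScard])
    have hfXYZ : ∀ i, f i = cliqueXYZ n i := by
      intro i
      apply Finset.Subset.antisymm
      · exact subset_cliqueXYZ (hclq _ (hfmem i).1) (hfmem i).2.1 (hfmem i).2.2
      · intro v hv
        rw [mem_cliqueXYZ] at hv
        rcases hv with rfl | rfl | ⟨k, rfl⟩
        · exact (hfmem i).2.1
        · exact (hfmem i).2.2
        · obtain ⟨C, hCmem, hxC, hzC⟩ := hcov _ _ (adj_xz (i := i) (k := k))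
          rw [← hS, hSdef, Finset.mem_insert, Finset.mem_insert] at hCmem
          rcases hCmem with rfl | rfl | hC
          · exact absurd (hCXsub hzC) (by simp [mem_cliqueX])
          · exact absurd (hCYsub hzC) (by simp [mem_cliqueY])
          · simp only [Finset.mem_image, Finset.mem_univ, true_and] at hC
            obtain ⟨j, rfl⟩ := hC
            obtain rfl := hx_f i j hxC
            exact hzC
    have hCXeq : CX = cliqueX n := by
      apply Finset.Subset.antisymm hCXsub
      intro v hv
      rw [mem_cliqueX] at hv
      rcases hv with rfl | ⟨k, rfl⟩
      · exact hx0CX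
      · obtain ⟨C, hCmem, hx0C, hxC⟩ := hcov _ _ (adj_x0_iff.mpr ⟨k, rfl⟩)
        rw [← hS, hSdef, Finset.mem_insert, Finset.mem_insert] at hCmem
        rcases hCmem with rfl | rfl | hC
        · exact hxC
        · exact absurd (hCYsub hx0C) x0_not_mem_cliqueY
        · simp only [Finset.mem_image, Finset.mem_univ, true_and] at hC
          obtain ⟨j, rfl⟩ := hC
          rw [hfXYZ j] at hx0C
          exact absurd hx0C x0_not_mem_cliqueXYZ
    have hCYeq : CY = cliqueY n := by
      apply Finset.Subset.antisymm hCYsub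
      intro v hv
      rw [mem_cliqueY] at hv
      rcases hv with rfl | ⟨k, rfl⟩
      · exact hy0CY
      · obtain ⟨C, hCmem, hy0C, hyC⟩ := hcov _ _ (adj_y0_iff.mpr ⟨k, rfl⟩)
        rw [← hS, hSdef, Finset.mem_insert, Finset.mem_insert] at hCmem
        rcases hCmem with rfl | rfl | hC
        · exact absurd (hCXsub hy0C) (by simp [mem_cliqueX])
        · exact hyC
        · simp only [Finset.mem_image, Finset.mem_univ, true_and] at hC
          obtain ⟨j, rfl⟩ := hC
          rw [hfXYZ j] at hy0C
          exact absurd hy0C y0_not_mem_cliqueXYZ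
    rw [← hS]
    ext C
    rw [hSdef, mem_canonicalCover, Finset.mem_insert, Finset.mem_insert]
    simp only [Finset.mem_image, Finset.mem_univ, true_and, hCXeq, hCYeq]
    constructor
    · rintro (rfl | rfl | ⟨i, rfl⟩)
      · tauto
      · tauto
      · exact Or.inl ⟨i, hfXYZ i⟩
    · rintro (⟨i, rfl⟩ | rfl | rfl)
      · exact Or.inr (Or.inr ⟨i, hfXYZ i⟩)
      · tauto
      · tauto
  · rintro rfl
    exact ⟨canonicalCover_isCover hn, canonicalCover_card⟩
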